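/- Let Ψ:[t₀,∞)→(0,∞) be non-decreasing. Then K(3Ψ) ⊂ G₁(Ψ), where G₁(Ψ) := {x∈[0,1) irrational : a_{n+1}(x) > Ψ(q_n(x)) for infinitely many n}. In particular, since G₁(Ψ) ⊂ G(Ψ), one has K(3Ψ) ⊂ G(Ψ). -/

import Mathlib

open Filter MeasureTheory Set

/-- The Gauss map `T(x) = 1/x mod 1`, with `T(0) = 0`. -/
noncomputable def gaussMap (x : ℝ) : ℝ := if x = 0 then 0 else Int.fract (1 / x)

/-- `cfA x n` is the `n`-th partial quotient `a_n(x)` of the continued fraction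
expansion of `x ∈ [0,1)`, for `n ≥ 1`: `a_n(x) = ⌊1 / T^{n-1}(x)⌋`. -/
noncomputable def cfA (x : ℝ) (n : ℕ) : ℕ := ⌊1 / (gaussMap^[n - 1] x)⌋₊

/-- `cfQ x n` is the denominator `q_n(x)` of the `n`-th convergent of `x`:
`q₀ = 1`, `q₁ = a₁`, `q_{n+2} = a_{n+2} q_{n+1} + q_n`. -/
noncomputable def cfQ (x : ℝ) : ℕ → ℕ
  | 0 => 1
  | 1 => cfA x 1
  | (n + 2) => cfA x (n + 2) * cfQ x (n + 1) + cfQ x n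

set_option maxHeartbeats 1000000

/-- numerators of convergents -/
noncomputable def cfP (x : ℝ) : ℕ → ℕ
  | 0 => 0
  | 1 => 1
  | (n + 2) => cfA x (n + 2) * cfP x (n + 1) + cfP x n

def CFGood (x : ℝ) : Prop := Irrational x ∧ x ∈ Set.Ioo (0:ℝ) 1

lemma CFGood.gauss {x : ℝ} (h : CFGood x) : CFGood (gaussMap x) := by
  obtain ⟨hirr, h0, h1⟩ : Irrational x ∧ 0 < x ∧ x < 1 := ⟨h.1, h.2.1, h.2.2⟩
  have hne : x ≠ 0 := ne_of_gt h0
  have hg : gaussMap x = Int.fract (1/x) := if_neg hne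
  have hinv : Irrational (1 / x) := by rw [one_div]; exact hirr.inv
  have hfr : Irrational (Int.fract (1/x)) := by
    rw [← Int.self_sub_floor]; exact hinv.sub_intCast _
  refine ⟨hg ▸ hfr, ?_, ?_⟩
  · rw [hg]
    exact (Int.fract_nonneg (1/x)).lt_of_ne (fun h => hfr.ne_zero h.symm)
  · rw [hg]; exact Int.fract_lt_one _

lemma CFGood.iter {x : ℝ} (h : CFGood x) (n : ℕ) : CFGood (gaussMap^[n] x) := by
  induction n with
  | zero => exact h
  | succ n ih => rw [Function.iterate_succ_apply']; exact ih.gauss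

/-- key recurrence : 1 / t_n = a_{n+1} + t_{n+1} -/
lemma cf_rec {x : ℝ} (h : CFGood x) (n : ℕ) :
    1 / (gaussMap^[n] x) = (cfA x (n+1) : ℝ) + gaussMap^[n+1] x := by
  set y := gaussMap^[n] x with hy
  have hg : CFGood y := h.iter n
  have h1y : 0 ≤ 1 / y := le_of_lt (by have := hg.2.1; positivity)
  have : (cfA x (n+1) : ℝ) = ⌊1/y⌋ := by
    simpa [cfA, ← hy] using natCast_floor_eq_intCast_floor (R := ℝ) h1y
  rw [Function.iterate_succ_apply', this]
  have : gaussMap y = Int.fract (1/y) := if_neg (ne_of_gt hg.2.1)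
  rw [this, Int.fract]
  ring

lemma cfA_pos {x : ℝ} (h : CFGood x) (n : ℕ) : 1 ≤ cfA x (n+1) := by
  have hg := h.iter n
  have : (1:ℝ) < 1 / (gaussMap^[n] x) := one_lt_one_div hg.2.1 hg.2.2
  have := Nat.le_floor (α := ℝ) (n := 1) (by exact_mod_cast this.le)
  simpa [cfA] using this

lemma cfQ_pos {x : ℝ} (h : CFGood x) : ∀ n, 1 ≤ cfQ x n := by
  have key : ∀ n, 1 ≤ cfQ x n ∧ 1 ≤ cfQ x (n+1) := by
    intro n
    induction n with
    | zero => exact ⟨le_refl _, by simpa [cfQ] using cfA_pos h 0⟩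
    | succ n ih =>
      refine ⟨ih.2, ?_⟩
      show 1 ≤ cfA x (n+2) * cfQ x (n+1) + cfQ x n
      have := ih.1
      omega
  exact fun n => (key n).1

lemma cfQ_mono {x : ℝ} (h : CFGood x) (n : ℕ) : cfQ x n ≤ cfQ x (n+1) := by
  cases n with
  | zero => simpa [cfQ] using cfA_pos h 0
  | succ n =>
    show cfQ x (n+1) ≤ cfA x (n+2) * cfQ x (n+1) + cfQ x n
    have h1 := cfA_pos h (n+1)
    nlinarith [cfQ_pos h n, cfQ_pos h (n+1)]

lemma cfQ_ge {x : ℝ} (h : CFGood x) : ∀ n, n ≤ cfQ x n := by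
  have key : ∀ n, n ≤ cfQ x n ∧ n + 1 ≤ cfQ x (n+1) := by
    intro n
    induction n with
    | zero => exact ⟨by omega, cfQ_pos h 1⟩
    | succ n ih =>
      refine ⟨ih.2, ?_⟩
      show n + 2 ≤ cfA x (n+2) * cfQ x (n+1) + cfQ x n
      have h1 := cfA_pos h (n+1)
      have h2 := cfQ_pos h n
      nlinarith [ih.2]
  exact fun n => (key n).1

lemma cf_val {x : ℝ} (h : CFGood x) (n : ℕ) :
    x = ((cfP x (n+1) : ℝ) + cfP x n * gaussMap^[n+1] x) /
        ((cfQ x (n+1) : ℝ) + cfQ x n * gaussMap^[n+1] x) := by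
  induction n with
  | zero =>
    have hrec := cf_rec h 0
    have hx0 : x ≠ 0 := ne_of_gt h.2.1
    have ht1 : (0:ℝ) < gaussMap^[1] x := (h.iter 1).2.1
    have hA : (0:ℝ) ≤ cfA x 1 := Nat.cast_nonneg _
    simp only [cfP, cfQ, Nat.cast_one, Nat.cast_zero]
    rw [eq_div_iff (by positivity)]
    field_simp at hrec ⊢
    simp only [zero_add, Function.iterate_zero, id_eq] at hrec ⊢
    field_simp at hrec
    linarith [hrec]
  | succ n ih =>
    have hrec := cf_rec h (n+1)
    set t := gaussMap^[n+1] x with htdef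
    set t' := gaussMap^[n+2] x with ht'def
    have htpos : (0:ℝ) < t := (h.iter (n+1)).2.1
    have ht'pos : (0:ℝ) < t' := (h.iter (n+2)).2.1
    have hApos : (0:ℝ) ≤ cfA x (n+2) := Nat.cast_nonneg _
    have hd : (0:ℝ) < (cfA x (n+2) : ℝ) + t' := by positivity
    have htprod : t * ((cfA x (n+2) : ℝ) + t') = 1 := by
      have h2 : (cfA x (n+1+1) : ℝ) + t' = 1 / t := hrec.symm
      rw [show (n+1+1) = n+2 from rfl] at h2
      rw [h2]
      field_simp
    have hQ1 : (1:ℝ) ≤ cfQ x (n+1) := by exact_mod_cast cfQ_pos h (n+1)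
    have hQ0 : (1:ℝ) ≤ cfQ x n := by exact_mod_cast cfQ_pos h n
    have hP2 : (cfP x (n+2) : ℝ) = cfA x (n+2) * cfP x (n+1) + cfP x n := by
      show ((cfA x (n+2) * cfP x (n+1) + cfP x n : ℕ) : ℝ) = _
      push_cast; ring
    have hQ2 : (cfQ x (n+2) : ℝ) = cfA x (n+2) * cfQ x (n+1) + cfQ x n := by
      show ((cfA x (n+2) * cfQ x (n+1) + cfQ x n : ℕ) : ℝ) = _
      push_cast; ring
    have hden1 : (0:ℝ) < (cfQ x (n+1) : ℝ) + cfQ x n * t := by nlinarith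
    have ihe := ih
    rw [eq_div_iff (ne_of_gt hden1)] at ihe
    have hden2 : (0:ℝ) < (cfQ x (n+2) : ℝ) + cfQ x (n+1) * t' := by
      have : (0:ℝ) < (cfQ x (n+2) : ℝ) := by
        have := cfQ_pos h (n+2); exact_mod_cast Nat.lt_of_lt_of_le Nat.zero_lt_one this
      nlinarith
    rw [eq_div_iff (ne_of_gt hden2), hP2, hQ2]
    linear_combination ((cfA x (n+2):ℝ) + t') * ihe + ((cfP x n : ℝ) - x * cfQ x n) * htprod

lemma cf_det (x : ℝ) : ∀ n : ℕ,
    (cfP x (n+1) : ℤ) * cfQ x n - (cfP x n : ℤ) * cfQ x (n+1) = (-1)^n := by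
  intro n
  induction n with
  | zero => simp [cfP, cfQ]
  | succ n ih =>
    have hP2 : (cfP x (n+2) : ℤ) = cfA x (n+2) * cfP x (n+1) + cfP x n := by
      show ((cfA x (n+2) * cfP x (n+1) + cfP x n : ℕ) : ℤ) = _
      push_cast; ring
    have hQ2 : (cfQ x (n+2) : ℤ) = cfA x (n+2) * cfQ x (n+1) + cfQ x n := by
      show ((cfA x (n+2) * cfQ x (n+1) + cfQ x n : ℕ) : ℤ) = _
      push_cast; ring
    rw [show n+1+1 = n+2 from rfl, hP2, hQ2, pow_succ]
    linear_combination (-1 : ℤ) * ih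

lemma cf_coprime (x : ℝ) (n : ℕ) : Nat.Coprime (cfP x n) (cfQ x n) := by
  cases n with
  | zero => simp [cfP, cfQ, Nat.Coprime]
  | succ n =>
    rw [← Nat.isCoprime_iff_coprime]
    refine ⟨(-1)^(n+1) * (-(cfQ x (n+2) : ℤ)), (-1)^(n+1) * (cfP x (n+2) : ℤ), ?_⟩
    have hd := cf_det x (n+1)
    have hsq : ((-1 : ℤ)^(n+1)) * ((-1 : ℤ)^(n+1)) = 1 := by
      rw [← pow_add]; exact Even.neg_one_pow ⟨n+1, by ring⟩
    calc (-1:ℤ)^(n+1) * (-(cfQ x (n+2):ℤ)) * (cfP x (n+1)) +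
          (-1:ℤ)^(n+1) * (cfP x (n+2):ℤ) * (cfQ x (n+1))
        = (-1:ℤ)^(n+1) * ((cfP x (n+2) : ℤ) * cfQ x (n+1) - (cfP x (n+1) : ℤ) * cfQ x (n+2)) := by
          ring
      _ = 1 := by rw [hd]; exact hsq

lemma div_sub_helper (x P1 P0 Q1 Q0 c : ℝ) (hQ1 : Q1 ≠ 0) (hE : Q1*c + Q0 ≠ 0)
    (hx : x = (P1*c + P0)/(Q1*c + Q0)) :
    x - P1/Q1 = (P0*Q1 - P1*Q0)/(Q1*(Q1*c+Q0)) := by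
  rw [hx, div_sub_div _ _ hE hQ1, div_eq_div_iff (mul_ne_zero hE hQ1) (mul_ne_zero hQ1 hE)]; ring

/-- lower bound for approximation by convergents -/
lemma cf_lower {x : ℝ} (h : CFGood x) (n : ℕ) :
    1 / ((cfQ x (n+1) : ℝ)^2 * ((cfA x (n+2) : ℝ) + 2)) <
      |x - (cfP x (n+1) : ℝ) / (cfQ x (n+1) : ℝ)| := by
  have hval := cf_val h (n+1)
  set t' := gaussMap^[n+2] x with ht'def
  have ht'pos : (0:ℝ) < t' := (h.iter (n+2)).2.1
  have ht'lt : t' < 1 := (h.iter (n+2)).2.2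
  have hA1 : (1:ℝ) ≤ cfA x (n+2) := by exact_mod_cast cfA_pos h (n+1)
  have hQ1 : (1:ℝ) ≤ cfQ x (n+1) := by exact_mod_cast cfQ_pos h (n+1)
  have hQ0 : (1:ℝ) ≤ cfQ x n := by exact_mod_cast cfQ_pos h n
  have hQmono : (cfQ x n : ℝ) ≤ cfQ x (n+1) := by exact_mod_cast cfQ_mono h n
  have hP2 : (cfP x (n+1+1) : ℝ) = cfA x (n+2) * cfP x (n+1) + cfP x n := by
    show ((cfA x (n+2) * cfP x (n+1) + cfP x n : ℕ) : ℝ) = _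
    push_cast; ring
  have hQ2 : (cfQ x (n+1+1) : ℝ) = cfA x (n+2) * cfQ x (n+1) + cfQ x n := by
    show ((cfA x (n+2) * cfQ x (n+1) + cfQ x n : ℕ) : ℝ) = _
    push_cast; ring
  rw [hP2, hQ2] at hval
  have hEpos : (0:ℝ) < (cfQ x (n+1):ℝ) * ((cfA x (n+2):ℝ) + t') + cfQ x n := by nlinarith
  have hx : x = ((cfP x (n+1):ℝ) * ((cfA x (n+2):ℝ) + t') + cfP x n) /
      ((cfQ x (n+1):ℝ) * ((cfA x (n+2):ℝ) + t') + cfQ x n) :=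
    hval.trans (by ring_nf)
  have hdiff := div_sub_helper x (cfP x (n+1)) (cfP x n) (cfQ x (n+1)) (cfQ x n)
      ((cfA x (n+2):ℝ) + t') (by positivity) (ne_of_gt hEpos) hx
  have hdet : ((cfP x n : ℝ) * cfQ x (n+1) - (cfP x (n+1) : ℝ) * cfQ x n) = -(-1:ℝ)^n := by
    have h1 := cf_det x n
    have h2 : ((cfP x (n+1) : ℝ) * cfQ x n - (cfP x n : ℝ) * cfQ x (n+1) : ℝ) = (-1)^n := by
      exact_mod_cast congrArg (fun z : ℤ => (z : ℝ)) h1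
    linarith [h2]
  have habs : |x - (cfP x (n+1) : ℝ) / (cfQ x (n+1) : ℝ)| =
      1 / ((cfQ x (n+1) : ℝ) * ((cfQ x (n+1):ℝ) * ((cfA x (n+2):ℝ) + t') + cfQ x n)) := by
    rw [hdiff, hdet, abs_div, abs_neg, abs_pow, abs_neg, abs_one, one_pow]
    rw [abs_of_pos (by positivity)]
  rw [habs]
  apply one_div_lt_one_div_of_lt
  · positivity
  · have k1 : (cfQ x (n+1):ℝ) * cfQ x n ≤ (cfQ x (n+1):ℝ) * cfQ x (n+1) := by nlinarith
    have k2 : (0:ℝ) < (cfQ x (n+1):ℝ) * (cfQ x (n+1):ℝ) * (1 - t') :=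
      mul_pos (mul_pos (by linarith) (by linarith)) (by linarith)
    nlinarith [k1, k2]

lemma cfP_pos {x : ℝ} (h : CFGood x) : ∀ n, 1 ≤ cfP x (n+1) := by
  have key : ∀ n, 1 ≤ cfP x (n+1) ∧ 1 ≤ cfP x (n+2) := by
    intro n
    induction n with
    | zero =>
      refine ⟨le_refl _, ?_⟩
      show 1 ≤ cfA x 2 * cfP x 1 + cfP x 0
      have h2 : 1 ≤ cfA x 2 := cfA_pos h 1
      simpa [cfP] using h2
    | succ n ih =>
      refine ⟨ih.2, ?_⟩
      show 1 ≤ cfA x (n+3) * cfP x (n+2) + cfP x (n+1)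
      have := ih.1
      omega
  exact fun n => (key n).1

lemma cfA_shift (x : ℝ) (m : ℕ) : cfA (gaussMap x) (m+1) = cfA x (m+2) := by
  unfold cfA
  rw [show m+1-1 = m from rfl, show m+2-1 = m+1 from rfl, Function.iterate_succ_apply]

lemma cf_shift (x : ℝ) : ∀ k, cfP x (k+1) = cfQ (gaussMap x) k ∧
    cfQ x (k+1) = cfA x 1 * cfQ (gaussMap x) k + cfP (gaussMap x) k := by
  intro k
  induction k using Nat.strong_induction_on with
  | _ k ih =>
    match k with
    | 0 => simp [cfP, cfQ]
    | 1 =>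
      constructor
      · show cfA x 2 * cfP x 1 + cfP x 0 = cfA (gaussMap x) 1
        rw [cfA_shift x 0]
        simp [cfP]
      · show cfA x 2 * cfQ x 1 + cfQ x 0 = cfA x 1 * cfA (gaussMap x) 1 + cfP (gaussMap x) 1
        rw [cfA_shift x 0]
        show cfA x 2 * cfA x 1 + 1 = cfA x 1 * cfA x 2 + 1
        ring
    | (k+2) =>
      obtain ⟨ihP1, ihQ1⟩ := ih (k+1) (by omega)
      obtain ⟨ihP0, ihQ0⟩ := ih k (by omega)
      constructor
      · show cfA x (k+3) * cfP x (k+2) + cfP x (k+1) = cfA (gaussMap x) (k+2) * cfQ (gaussMap x) (k+1) + cfQ (gaussMap x) k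
        rw [← cfA_shift x (k+1), ihP1, ihP0]
      · show cfA x (k+3) * cfQ x (k+2) + cfQ x (k+1) =
          cfA x 1 * (cfA (gaussMap x) (k+2) * cfQ (gaussMap x) (k+1) + cfQ (gaussMap x) k) +
          (cfA (gaussMap x) (k+2) * cfP (gaussMap x) (k+1) + cfP (gaussMap x) k)
        rw [← cfA_shift x (k+1), ihQ1, ihQ0]
        ring

lemma cf_conv_inv : ∀ n : ℕ, ∀ x : ℝ, CFGood x →
    ((Real.convergent (1/x) n : ℚ) : ℝ) = (cfQ x (n+1) : ℝ) / (cfP x (n+1) : ℝ) := by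
  intro n
  induction n with
  | zero =>
    intro x h
    rw [Real.convergent_zero]
    have h1y : 0 ≤ 1 / x := le_of_lt (by have := h.2.1; positivity)
    have hfl : ((cfA x 1 : ℕ) : ℝ) = (⌊1/x⌋ : ℝ) := by
      simpa [cfA] using natCast_floor_eq_intCast_floor (R := ℝ) h1y
    rw [one_div] at hfl
    simp [cfQ, cfP, hfl]
  | succ n ih =>
    intro x h
    have hy := h.gauss
    have hne : x ≠ 0 := ne_of_gt h.2.1
    have hfract : Int.fract (1/x) = gaussMap x := (if_neg hne).symm
    rw [Real.convergent_succ, hfract]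
    have h1y : 0 ≤ 1 / x := le_of_lt (by have := h.2.1; positivity)
    have hfl : ((cfA x 1 : ℕ) : ℝ) = (⌊1/x⌋ : ℝ) := by
      simpa [cfA] using natCast_floor_eq_intCast_floor (R := ℝ) h1y
    have ihy := ih (gaussMap x) hy
    rw [one_div] at ihy
    have hPy : (1:ℝ) ≤ cfP (gaussMap x) (n+1) := by exact_mod_cast cfP_pos hy n
    have hQy : (1:ℝ) ≤ cfQ (gaussMap x) (n+1) := by exact_mod_cast cfQ_pos hy (n+1)
    have hPs : (cfP x (n+2) : ℝ) = (cfQ (gaussMap x) (n+1) : ℝ) := by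
      exact_mod_cast congrArg (Nat.cast (R := ℝ)) (cf_shift x (n+1)).1
    have hQs : (cfQ x (n+2) : ℝ) =
        (cfA x 1 : ℝ) * (cfQ (gaussMap x) (n+1) : ℝ) + (cfP (gaussMap x) (n+1) : ℝ) := by
      have := (cf_shift x (n+1)).2
      exact_mod_cast congrArg (Nat.cast (R := ℝ)) this
    push_cast
    rw [ihy, ← hfl, hPs, hQs]
    rw [inv_div]
    field_simp

lemma cf_conv {x : ℝ} (h : CFGood x) (m : ℕ) :
    ((Real.convergent x m : ℚ) : ℝ) = (cfP x m : ℝ) / (cfQ x m : ℝ) := by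
  cases m with
  | zero =>
    rw [Real.convergent_zero]
    have : ⌊x⌋ = 0 := Int.floor_eq_zero_iff.2 ⟨le_of_lt h.2.1, h.2.2⟩
    simp [this, cfP, cfQ]
  | succ n =>
    rw [Real.convergent_succ]
    have : ⌊x⌋ = 0 := Int.floor_eq_zero_iff.2 ⟨le_of_lt h.2.1, h.2.2⟩
    have hfract : Int.fract x = x := Int.fract_eq_self.2 ⟨le_of_lt h.2.1, h.2.2⟩
    rw [this, hfract]
    have hP : (1:ℝ) ≤ cfP x (n+1) := by exact_mod_cast cfP_pos h n
    have hQ : (1:ℝ) ≤ cfQ x (n+1) := by exact_mod_cast cfQ_pos h (n+1)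
    have := cf_conv_inv n x h
    rw [one_div] at this
    push_cast
    rw [this, inv_div]
    simp

lemma infinite_of_unbdd {T : Set ℕ} (h : ∀ N, ∃ n ∈ T, N < n) : T.Infinite := by
  apply Set.infinite_of_not_bddAbove
  rintro ⟨b, hb⟩
  obtain ⟨n, hn, hbn⟩ := h b
  exact absurd (hb hn) (by omega)

lemma exists_big_q {x : ℝ} {Φ : ℝ → ℝ}
    (hS : {r : ℤ × ℕ | 0 < r.2 ∧ |x - (r.1:ℝ)/r.2| < 1/((r.2:ℝ)^2 * Φ r.2)}.Infinite)
    (M : ℕ) :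
    ∃ r : ℤ × ℕ, (0 < r.2 ∧ |x - (r.1:ℝ)/r.2| < 1/((r.2:ℝ)^2 * Φ r.2)) ∧ M < r.2 := by
  by_contra hcon
  push_neg at hcon
  apply hS
  set g : ℕ → ℝ := fun q => 1/((q:ℝ)^2 * Φ q) with hg
  set C : ℝ := ∑ q ∈ Finset.Iic M, |g q| with hCdef
  have hC0 : 0 ≤ C := Finset.sum_nonneg (fun i _ => abs_nonneg _)
  have hC : ∀ q ≤ M, g q ≤ C := fun q hq =>
    (le_abs_self _).trans (Finset.single_le_sum (f := fun q => |g q|)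
      (fun i _ => abs_nonneg _) (Finset.mem_Iic.2 hq))
  set B : ℝ := M * (|x| + C) with hBdef
  apply Set.Finite.subset ((Set.finite_Icc (-(⌈B⌉)) ⌈B⌉).prod (Set.finite_Iic M))
  rintro ⟨p, q⟩ ⟨hq, happ⟩
  have hqM : q ≤ M := hcon (p, q) ⟨hq, happ⟩
  have hq1 : (1:ℝ) ≤ q := by exact_mod_cast hq
  have h1 : |(p:ℝ)/q| ≤ |x| + C := by
    have h2 : |(p:ℝ)/q| ≤ |x - (p:ℝ)/q| + |x| := by
      have := abs_sub_abs_le_abs_sub ((p:ℝ)/q) x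
      have h3 : |(p:ℝ)/q - x| = |x - (p:ℝ)/q| := abs_sub_comm _ _
      linarith [abs_nonneg x, this, abs_sub_abs_le_abs_sub ((p:ℝ)/q) x, h3 ▸ this]
    have h4 : |x - (p:ℝ)/q| < C := lt_of_lt_of_le happ (hC q hqM)
    linarith
  have hpB : |(p:ℝ)| ≤ B := by
    have h5 : |(p:ℝ)| = |(p:ℝ)/q| * q := by
      rw [abs_div, abs_of_pos (by linarith : (0:ℝ) < q)]
      field_simp
    rw [h5, hBdef]
    have h6 : (q:ℝ) ≤ M := by exact_mod_cast hqM
    have h7 : 0 ≤ |x| + C := by positivity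
    nlinarith [abs_nonneg ((p:ℝ)/q)]
  constructor
  · have h8 : |p| ≤ ⌈B⌉ := by
      have : |(p:ℝ)| ≤ (⌈B⌉:ℝ) := hpB.trans (Int.le_ceil B)
      exact_mod_cast this
    simpa [Set.mem_Icc] using abs_le.1 h8
  · exact Set.mem_Iic.2 hqM

lemma legendre_step {x : ℝ} (h : CFGood x) {p : ℤ} {q : ℕ} (hq : 0 < q) {c : ℝ}
    (hc : c ≤ 1/(2 * (q:ℝ)^2)) (happ : |x - (p:ℝ)/q| < c) :
    ∃ m, (cfP x m : ℝ) / (cfQ x m : ℝ) = (p:ℝ)/q ∧ cfQ x m ≤ q := by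
  set r : ℚ := (p : ℚ)/(q : ℚ) with hrdef
  have hrden : r.den ≤ q := by
    have h1 := Rat.den_dvd p (q:ℤ)
    rw [Rat.divInt_eq_div] at h1
    have h2 : (r.den : ℤ) ∣ (q:ℤ) := by
      rw [hrdef]; exact_mod_cast h1
    have h3 : r.den ∣ q := by exact_mod_cast h2
    exact Nat.le_of_dvd hq h3
  have hrden1 : 1 ≤ r.den := r.den_pos
  have hrcast : (r : ℝ) = (p:ℝ)/q := by rw [hrdef, Rat.cast_div]; push_cast; ring
  have hleg : |x - (r:ℝ)| < 1/(2 * (r.den:ℝ)^2) := by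
    rw [hrcast]
    refine lt_of_lt_of_le (lt_of_lt_of_le happ hc) ?_
    apply one_div_le_one_div_of_le
    · have : (0:ℝ) < r.den := by exact_mod_cast hrden1
      positivity
    · have h1 : (r.den : ℝ) ≤ q := by exact_mod_cast hrden
      have h2 : (0:ℝ) ≤ r.den := by positivity
      nlinarith
  obtain ⟨m, hm⟩ := Real.exists_rat_eq_convergent hleg
  refine ⟨m, ?_, ?_⟩
  · rw [← cf_conv h m, ← hm, hrcast]
  · -- cfQ x m ∣ q from coprimality
    have hval : (cfP x m : ℝ) / (cfQ x m : ℝ) = (p:ℝ)/q := by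
      rw [← cf_conv h m, ← hm, hrcast]
    have hQpos : 0 < cfQ x m := cfQ_pos h m
    have hQposR : (0:ℝ) < cfQ x m := by exact_mod_cast hQpos
    have hqR : (0:ℝ) < q := by exact_mod_cast hq
    have hcross : (cfP x m : ℝ) * q = (p:ℝ) * cfQ x m := by
      rw [div_eq_div_iff (ne_of_gt hQposR) (ne_of_gt hqR)] at hval
      linarith
    have hcrossZ : (cfP x m : ℤ) * q = p * cfQ x m := by exact_mod_cast hcross
    have hdvdZ : (cfQ x m : ℤ) ∣ (cfP x m : ℤ) * q := ⟨p, by linarith [hcrossZ]⟩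
    have hdvdN : cfQ x m ∣ cfP x m * q := by exact_mod_cast hdvdZ
    have hcop : Nat.Coprime (cfQ x m) (cfP x m) := (cf_coprime x m).symm
    exact Nat.le_of_dvd hq (hcop.dvd_of_dvd_mul_left hdvdN)

/-- `K(Φ)`: the set of `x ∈ [0,1)` with `|x - p/q| < 1/(q² Φ(q))` for infinitely many
pairs `(p, q) ∈ ℤ × ℕ` (with `q > 0`). -/
def KSet (Φ : ℝ → ℝ) : Set ℝ :=
  {x | x ∈ Ico (0 : ℝ) 1 ∧
    {r : ℤ × ℕ | 0 < r.2 ∧ |x - (r.1 : ℝ) / r.2| < 1 / ((r.2 : ℝ) ^ 2 * Φ r.2)}.Infinite}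

/-- `G₁(Ψ)`: the set of irrational `x ∈ [0,1)` with `a_{n+1}(x) > Ψ(q_n(x))` for
infinitely many `n`. -/
def G1Set (Ψ : ℝ → ℝ) : Set ℝ :=
  {x | x ∈ Ico (0 : ℝ) 1 ∧ Irrational x ∧
    {n : ℕ | 0 < n ∧ Ψ (cfQ x n) < (cfA x (n + 1) : ℝ)}.Infinite}

/-- `G(Ψ)`: the set of irrational `x ∈ [0,1)` with `a_n(x) a_{n+1}(x) > Ψ(q_n(x))` for
infinitely many `n`. -/
def GSet (Ψ : ℝ → ℝ) : Set ℝ :=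
  {x | x ∈ Ico (0 : ℝ) 1 ∧ Irrational x ∧
    {n : ℕ | 0 < n ∧ Ψ (cfQ x n) < (cfA x n : ℝ) * cfA x (n + 1)}.Infinite}

/-- **`K(3Ψ) ⊂ G₁(Ψ) ⊂ G(Ψ)`** (within the irrational numbers, on which the sets `G₁`
and `G` are defined). -/
theorem KSet_subset_G1Set_subset_GSet
    (t₀ : ℝ) (Ψ : ℝ → ℝ)
    (hΨpos : ∀ t ∈ Ici t₀, 0 < Ψ t) (hΨmono : MonotoneOn Ψ (Ici t₀)) :
    (∀ x ∈ KSet (fun t => 3 * Ψ t), Irrational x → x ∈ G1Set Ψ) ∧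
    G1Set Ψ ⊆ GSet Ψ ∧
    (∀ x ∈ KSet (fun t => 3 * Ψ t), Irrational x → x ∈ GSet Ψ) := by
  have hKG1 : ∀ x ∈ KSet (fun t => 3 * Ψ t), Irrational x → x ∈ G1Set Ψ := by
    intro x hxK hirr
    obtain ⟨hxIco, hS⟩ := hxK
    have hx0 : 0 < x := lt_of_le_of_ne hxIco.1 (Ne.symm hirr.ne_zero)
    have hg : CFGood x := ⟨hirr, hx0, hxIco.2⟩
    refine ⟨hxIco, hirr, ?_⟩
    apply infinite_of_unbdd
    intro N
    set N' : ℕ := max (N+1) (⌈t₀⌉₊ + 1) with hN'def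
    have hQt₀ : ∀ n, N' ≤ n → t₀ ≤ (cfQ x n : ℝ) := by
      intro n hn
      have h1 : ⌈t₀⌉₊ ≤ n := le_trans (le_trans (Nat.le_succ _) (le_max_right _ _)) hn
      have h2 : n ≤ cfQ x n := cfQ_ge hg n
      have h3 : (⌈t₀⌉₊ : ℝ) ≤ (cfQ x n : ℝ) := by exact_mod_cast le_trans h1 h2
      exact le_trans (Nat.le_ceil t₀) h3
    by_cases hsmall : ∀ K : ℕ, ∃ q : ℕ, K ≤ q ∧ t₀ ≤ (q:ℝ) ∧ Ψ q < 1
    · -- Ψ is < 1 along arbitrarily large q : every large n works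
      refine ⟨N', ⟨by omega, ?_⟩, by omega⟩
      obtain ⟨q, hq1, hq2, hq3⟩ := hsmall (cfQ x N')
      have hmono := hΨmono (hQt₀ N' le_rfl) hq2 (by exact_mod_cast hq1)
      have hA : (1:ℝ) ≤ cfA x (N'+1) := by
        have := cfA_pos hg N'; exact_mod_cast this
      linarith
    · push_neg at hsmall
      obtain ⟨K, hK⟩ := hsmall
      -- Ψ q ≥ 1 for all q ≥ K with q ≥ t₀
      have hK' : ∀ q : ℕ, K ≤ q → t₀ ≤ (q:ℝ) → 1 ≤ Ψ q := by
        intro q h1 h2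
        by_contra hcon
        exact absurd (hK q h1 h2) (by push_neg; linarith)
      -- minimum distance to the first N' convergents
      have hne : ∀ m : ℕ, (0:ℝ) < |x - (cfP x m : ℝ)/(cfQ x m : ℝ)| := by
        intro m
        rw [abs_pos, sub_ne_zero]
        intro hEq
        apply hirr
        exact ⟨(cfP x m : ℚ)/(cfQ x m : ℚ), by rw [Rat.cast_div]; push_cast; rw [← hEq]⟩
      set ε : ℝ := (Finset.range (N'+1)).inf' (by simp) (fun m => |x - (cfP x m : ℝ)/(cfQ x m : ℝ)|)
        with hεdef
      have hε : 0 < ε := by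
        rw [hεdef, Finset.lt_inf'_iff]
        exact fun m _ => hne m
      set M : ℕ := max (max K ⌈t₀⌉₊) ⌈1/ε⌉₊ with hMdef
      obtain ⟨⟨p, q⟩, ⟨hq, happ⟩, hqM⟩ := exists_big_q (x := x) (Φ := fun t => 3 * Ψ t) hS M
      simp only at hq happ hqM
      have hqK : K ≤ q := by omega
      have hqt₀ : t₀ ≤ (q:ℝ) := by
        have h1 : (⌈t₀⌉₊ : ℝ) ≤ q := by exact_mod_cast (by omega : ⌈t₀⌉₊ ≤ q)
        linarith [Nat.le_ceil t₀]
      have hΨq : 1 ≤ Ψ q := hK' q hqK hqt₀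
      have hqR : (1:ℝ) ≤ q := by exact_mod_cast hq
      -- Legendre
      obtain ⟨m, hval, hQm⟩ := legendre_step hg hq
        (c := 1/((q:ℝ)^2 * (3 * Ψ (q:ℝ))))
        (by
          apply one_div_le_one_div_of_le
          · positivity
          · nlinarith) happ
      -- the approximation is very good, so m is large
      have happ' : |x - (cfP x m : ℝ)/(cfQ x m : ℝ)| < 1/((q:ℝ)^2 * (3 * Ψ (q:ℝ))) := by
        rw [hval]; exact happ
      have hb1 : 1/((q:ℝ)^2 * (3 * Ψ (q:ℝ))) ≤ 1/(q:ℝ) := by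
        apply one_div_le_one_div_of_le
        · linarith
        · nlinarith
      have hb2 : 1/(q:ℝ) < ε := by
        have h1 : (⌈1/ε⌉₊ : ℝ) + 1 ≤ q := by exact_mod_cast (by omega : ⌈1/ε⌉₊ + 1 ≤ q)
        have h2 : 1/ε ≤ (⌈1/ε⌉₊ : ℝ) := Nat.le_ceil _
        have h3 : 1/ε + 1 ≤ (q:ℝ) := by linarith
        rw [div_lt_iff₀ (by linarith : (0:ℝ) < q)]
        have h4 : ε * (1/ε) = 1 := by field_simp
        nlinarith
      have hsmall2 : |x - (cfP x m : ℝ)/(cfQ x m : ℝ)| < ε := by linarith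
      have hmN' : N' < m := by
        by_contra hcon
        push_neg at hcon
        have : ε ≤ |x - (cfP x m : ℝ)/(cfQ x m : ℝ)| := by
          rw [hεdef]
          exact Finset.inf'_le _ (Finset.mem_range.2 (by omega))
        linarith
      -- write m = n+1 and use the lower bound
      obtain ⟨n, rfl⟩ : ∃ n, m = n + 1 := ⟨m - 1, by omega⟩
      have hlow := cf_lower hg n
      have hA1 : (1:ℝ) ≤ cfA x (n+2) := by exact_mod_cast cfA_pos hg (n+1)
      have hQpos : (1:ℝ) ≤ cfQ x (n+1) := by exact_mod_cast cfQ_pos hg (n+1)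
      have hQmR : (cfQ x (n+1) : ℝ) ≤ q := by exact_mod_cast hQm
      -- 1/(Q² (A+2)) < 1/(q² 3Ψq)  ⇒  q² 3Ψq < Q²(A+2)
      have hchain : 1 / ((cfQ x (n+1) : ℝ)^2 * ((cfA x (n+2) : ℝ) + 2)) <
          1/((q:ℝ)^2 * (3 * Ψ (q:ℝ))) := lt_trans hlow happ'
      have hposL : (0:ℝ) < (q:ℝ)^2 * (3 * Ψ (q:ℝ)) := by nlinarith
      have hposR : (0:ℝ) < (cfQ x (n+1) : ℝ)^2 * ((cfA x (n+2) : ℝ) + 2) := by nlinarith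
      have hflip : (q:ℝ)^2 * (3 * Ψ (q:ℝ)) < (cfQ x (n+1) : ℝ)^2 * ((cfA x (n+2) : ℝ) + 2) := by
        by_contra hcon
        push_neg at hcon
        exact absurd hchain (not_lt.2 (one_div_le_one_div_of_le hposR hcon))
      have hQsq : (cfQ x (n+1) : ℝ)^2 ≤ (q:ℝ)^2 := by nlinarith
      have hq2pos : (0:ℝ) < (q:ℝ)^2 := by positivity
      have hA2 : (0:ℝ) ≤ (cfA x (n+2):ℝ) + 2 := by linarith
      have h9 : (cfQ x (n+1):ℝ)^2 * ((cfA x (n+2):ℝ)+2) ≤ (q:ℝ)^2 * ((cfA x (n+2):ℝ)+2) :=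
        mul_le_mul_of_nonneg_right hQsq hA2
      have h10 : (q:ℝ)^2 * (3 * Ψ (q:ℝ)) < (q:ℝ)^2 * ((cfA x (n+2):ℝ)+2) :=
        lt_of_lt_of_le hflip h9
      have h11 : 3 * Ψ (q:ℝ) < (cfA x (n+2):ℝ) + 2 := lt_of_mul_lt_mul_left h10 (le_of_lt hq2pos)
      have hΨA : Ψ (q:ℝ) < (cfA x (n+2) : ℝ) := by linarith
      -- monotonicity down to cfQ x (n+1)
      have hQnt₀ : t₀ ≤ (cfQ x (n+1) : ℝ) := hQt₀ (n+1) (by omega)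
      have hfinal : Ψ (cfQ x (n+1)) < (cfA x (n+2) : ℝ) :=
        lt_of_le_of_lt (hΨmono hQnt₀ hqt₀ hQmR) hΨA
      exact ⟨n+1, ⟨by omega, hfinal⟩, by omega⟩
  have hG1G : G1Set Ψ ⊆ GSet Ψ := by
    intro x hx
    obtain ⟨hxIco, hirr, hinf⟩ := hx
    have hx0 : 0 < x := lt_of_le_of_ne hxIco.1 (Ne.symm hirr.ne_zero)
    have hg : CFGood x := ⟨hirr, hx0, hxIco.2⟩
    refine ⟨hxIco, hirr, hinf.mono ?_⟩
    rintro n ⟨hn, hΨn⟩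
    refine ⟨hn, ?_⟩
    obtain ⟨k, rfl⟩ : ∃ k, n = k + 1 := ⟨n - 1, by omega⟩
    have h1 : (1:ℝ) ≤ cfA x (k+1) := by exact_mod_cast cfA_pos hg k
    have h2 : (0:ℝ) ≤ cfA x (k+2) := Nat.cast_nonneg _
    nlinarith
  exact ⟨hKG1, hG1G, fun x hx hirr => hG1G (hKG1 x hx hirr)⟩
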